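/- For finite point sets S ⊆ T in a metric space with |S| ≥ 2, the cost of a minimum spanning tree of S is at most twice the cost of a minimum spanning tree of T. -/

import Mathlib

noncomputable def graphCost {V : Type*} {X : Type*} [MetricSpace X] [Fintype V]
    (G : SimpleGraph V) (p : V → X) : ℝ :=
  have : DecidableEq V := Classical.decEq V
  have : DecidableRel G.Adj := Classical.decRel _
  ∑ e ∈ G.edgeFinset, Sym2.lift ⟨fun u v => dist (p u) (p v), fun u v => dist_comm (p u) (p v)⟩ e

section AuxSteiner

open SimpleGraph Finset

set_option linter.unusedSectionVars false

variable {X : Type*} [MetricSpace X] {V : Type*}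


/-- Sum of consecutive distances along a list. -/
noncomputable def chainSum : List X → ℝ
  | a :: b :: l => dist a b + chainSum (b :: l)
  | _ => 0

@[simp] lemma chainSum_nil : chainSum ([] : List X) = 0 := rfl
@[simp] lemma chainSum_single (a : X) : chainSum [a] = 0 := rfl
lemma chainSum_cons_cons (a b : X) (l : List X) :
    chainSum (a :: b :: l) = dist a b + chainSum (b :: l) := rfl

lemma chainSum_nonneg : ∀ l : List X, 0 ≤ chainSum l
  | [] => le_refl _
  | [_] => le_refl _
  | a :: b :: l => by
      rw [chainSum_cons_cons]
      exact add_nonneg dist_nonneg (chainSum_nonneg (b :: l))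

lemma chainSum_le_cons (a : X) : ∀ l : List X, chainSum l ≤ chainSum (a :: l)
  | [] => le_refl _
  | b :: l => by
      rw [chainSum_cons_cons]
      exact le_add_of_nonneg_left dist_nonneg

lemma chainSum_append_cons : ∀ (A : List X) (a : X) (B : List X),
    chainSum (A ++ a :: B) = chainSum (A ++ [a]) + chainSum (a :: B)
  | [], a, B => by simp
  | [c], a, B => by simp [chainSum_cons_cons]
  | c :: d :: A, a, B => by
      have h := chainSum_append_cons (d :: A) a B
      simp only [List.cons_append, chainSum_cons_cons] at *
      rw [h]; ring

lemma chainSum_splice (A : List X) (a b : X) (B : List X) :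
    chainSum (A ++ a :: b :: a :: B) = chainSum (A ++ a :: B) + 2 * dist a b := by
  rw [chainSum_append_cons A a (b :: a :: B), chainSum_append_cons A a B,
    chainSum_cons_cons, chainSum_cons_cons]
  rw [dist_comm b a]
  ring

lemma chainSum_cons_le_cons_cons (a b : X) : ∀ l : List X,
    chainSum (a :: l) ≤ chainSum (a :: b :: l)
  | [] => by simpa [chainSum_cons_cons] using dist_nonneg
  | c :: t => by
      rw [chainSum_cons_cons, chainSum_cons_cons, chainSum_cons_cons]
      have := dist_triangle a b c
      linarith

lemma chainSum_sublist_cons {l₁ l₂ : List X} (h : List.Sublist l₁ l₂) :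
    ∀ a : X, chainSum (a :: l₁) ≤ chainSum (a :: l₂) := by
  induction h with
  | slnil => intro a; exact le_refl _
  | cons b h ih =>
      intro a
      exact (ih a).trans (chainSum_cons_le_cons_cons a b _)
  | cons_cons b h ih =>
      intro a
      rw [chainSum_cons_cons, chainSum_cons_cons]
      exact add_le_add le_rfl (ih b)

lemma chainSum_sublist {l₁ l₂ : List X} (h : List.Sublist l₁ l₂) :
    chainSum l₁ ≤ chainSum l₂ := by
  induction h with
  | slnil => exact le_refl _
  | cons b h ih => exact ih.trans (chainSum_le_cons b _)
  | cons_cons b h ih => exact chainSum_sublist_cons h b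


noncomputable def eCost (p : V → X) : Sym2 V → ℝ :=
  Sym2.lift ⟨fun u v => dist (p u) (p v), fun u v => dist_comm (p u) (p v)⟩

@[simp] lemma eCost_pair (p : V → X) (a b : V) : eCost p s(a, b) = dist (p a) (p b) := rfl

lemma graphCost_eq [Fintype V] (G : SimpleGraph V) (p : V → X) [Fintype G.edgeSet] :
    graphCost G p = ∑ e ∈ G.edgeFinset, eCost p e := by
  unfold graphCost
  congr!

lemma graphCost_nonneg [Fintype V] (G : SimpleGraph V) (p : V → X) : 0 ≤ graphCost G p := by
  classical
  rw [graphCost_eq]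
  refine Finset.sum_nonneg fun e _ => ?_
  induction e using Sym2.ind with
  | _ a b => exact dist_nonneg

section Leaf

variable [Fintype V] [DecidableEq V] {G : SimpleGraph V} {v u : V}

/-- The graph induced on the complement of `v`. -/
abbrev delVert (G : SimpleGraph V) (v : V) : SimpleGraph {w : V // w ≠ v} :=
  G.comap (fun w => (w : V))

lemma cost_split (p : V → X) (hnb : G.neighborSet v = {u}) :
    graphCost G p = graphCost (delVert G v) (fun w => p w) + dist (p u) (p v) := by
  classical
  rw [graphCost_eq, graphCost_eq]
  have hsplit := Finset.sum_filter_add_sum_filter_not G.edgeFinset (fun e => v ∈ e) (eCost p)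
  have hu_ne : u ≠ v := by
    have hu : u ∈ G.neighborSet v := by rw [hnb]; rfl
    exact (G.ne_of_adj hu).symm
  have h1 : G.edgeFinset.filter (fun e => v ∈ e) = {s(u, v)} := by
    ext e
    simp only [Finset.mem_filter, Finset.mem_singleton, mem_edgeFinset]
    constructor
    · rintro ⟨he, hv⟩
      induction e using Sym2.ind with
      | _ a b =>
        rw [Sym2.mem_iff] at hv
        rcases hv with rfl | rfl
        · have hb : b ∈ G.neighborSet v := he
          rw [hnb, Set.mem_singleton_iff] at hb
          subst hb; exact Sym2.eq_swap
        · have ha : a ∈ G.neighborSet v := (mem_edgeSet G).mp (Sym2.eq_swap ▸ he)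
          rw [hnb, Set.mem_singleton_iff] at ha
          subst ha; rfl
    · rintro rfl
      have hu : u ∈ G.neighborSet v := by rw [hnb]; rfl
      exact ⟨hu.symm, Sym2.mem_mk_right u v⟩
  have h2 : G.edgeFinset.filter (fun e => ¬ v ∈ e)
      = (delVert G v).edgeFinset.image (Sym2.map (Subtype.val : {w : V // w ≠ v} → V)) := by
    ext e
    simp only [Finset.mem_filter, Finset.mem_image, mem_edgeFinset]
    constructor
    · rintro ⟨he, hv⟩
      induction e using Sym2.ind with
      | _ a b =>
        have ha : a ≠ v := fun h => hv (h ▸ Sym2.mem_mk_left a b)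
        have hb : b ≠ v := fun h => hv (h ▸ Sym2.mem_mk_right a b)
        exact ⟨s(⟨a, ha⟩, ⟨b, hb⟩), he, rfl⟩
    · rintro ⟨e', he', rfl⟩
      induction e' using Sym2.ind with
      | _ a b =>
        refine ⟨he', ?_⟩
        intro hv
        rw [Sym2.map_pair_eq, Sym2.mem_iff] at hv
        rcases hv with h | h
        · exact a.2 h.symm
        · exact b.2 h.symm
  rw [← hsplit, h1, h2, Finset.sum_singleton, eCost_pair,
    Finset.sum_image (fun x _ y _ h => Sym2.map.injective Subtype.val_injective h)]
  have : ∀ e' ∈ (delVert G v).edgeFinset,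
      eCost p (Sym2.map (Subtype.val : {w : V // w ≠ v} → V) e') = eCost (fun w : {w : V // w ≠ v} => p ↑w) e' := by
    intro e' _
    induction e' using Sym2.ind with
    | _ a b => rfl
  rw [Finset.sum_congr rfl this]
  ring

end Leaf

section Leaf2

variable [DecidableEq V] {G : SimpleGraph V} {v u : V}

/-- The embedding hom from `delVert G v` to `G`. -/
def homDel (G : SimpleGraph V) (v : V) : delVert G v →g G :=
  ⟨Subtype.val, fun h => h⟩

lemma path_avoids_leaf (hnb : G.neighborSet v = {u}) :
    ∀ {a b : V} (p : G.Walk a b), p.IsPath → a ≠ v → b ≠ v → v ∉ p.support := by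
  intro a b p
  induction p with
  | nil =>
      intro _ ha _ hv
      rw [SimpleGraph.Walk.support_nil, List.mem_singleton] at hv
      exact ha hv.symm
  | @cons a c b h q ih =>
      intro hp ha hb hv
      rw [SimpleGraph.Walk.support_cons, List.mem_cons] at hv
      rcases hv with hv | hv
      · exact ha hv.symm
      · by_cases hc : c = v
        · subst hc
          have ha_u : a = u := by
            have : a ∈ G.neighborSet c := h.symm
            rwa [hnb, Set.mem_singleton_iff] at this
          cases q with
          | nil => exact hb rfl
          | @cons _ z _ h₂ r =>
              have hz : z = u := by
                have : z ∈ G.neighborSet c := h₂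
                rwa [hnb, Set.mem_singleton_iff] at this
              have hmem : a ∈ (SimpleGraph.Walk.cons h₂ r).support := by
                rw [SimpleGraph.Walk.support_cons]
                right
                rw [ha_u, ← hz]
                exact r.start_mem_support
              rw [SimpleGraph.Walk.cons_isPath_iff] at hp
              exact hp.2 hmem
        · exact ih (SimpleGraph.Walk.IsPath.of_cons hp) hc hb hv

lemma walk_lift :
    ∀ {a b : V} (p : G.Walk a b), (∀ w ∈ p.support, w ≠ v) → ∀ (ha : a ≠ v) (hb : b ≠ v),
      ∃ p' : (delVert G v).Walk ⟨a, ha⟩ ⟨b, hb⟩, p'.map (homDel G v) = p := by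
  intro a b p
  induction p with
  | nil => exact fun _ _ _ => ⟨SimpleGraph.Walk.nil, rfl⟩
  | @cons a c b hadj q ih =>
      intro h ha hb
      have hc : c ≠ v := h c (by simp [SimpleGraph.Walk.support_cons])
      obtain ⟨q', hq'⟩ := ih (fun w hw => h w (by simp [SimpleGraph.Walk.support_cons, hw])) hc hb
      refine ⟨SimpleGraph.Walk.cons (show (delVert G v).Adj ⟨a, ha⟩ ⟨c, hc⟩ from hadj) q', ?_⟩
      rw [SimpleGraph.Walk.map_cons, hq']
      rfl

lemma isTree_delVert (hG : G.IsTree) (hnb : G.neighborSet v = {u}) (hu : u ≠ v) :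
    (delVert G v).IsTree := by
  constructor
  · have hne : Nonempty {w : V // w ≠ v} := ⟨⟨u, hu⟩⟩
    refine ⟨fun a b => ?_⟩
    obtain ⟨w, hw, -⟩ := hG.existsUnique_path ↑a ↑b
    have hv : v ∉ w.support := path_avoids_leaf hnb w hw a.2 b.2
    obtain ⟨w', -⟩ := walk_lift w (fun x hx hxv => absurd hx (by rw [hxv]; exact hv)) a.2 b.2
    exact ⟨w'⟩
  · intro x c hc
    exact hG.IsAcyclic (c.map (homDel G v))
      ((SimpleGraph.Walk.map_isCycle_iff_of_injective Subtype.val_injective).mpr hc)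

lemma path_from_leaf_short {v u b : V} (hnb : G.neighborSet v = {u}) (hb : b = u) :
    ∀ (qr : G.Walk v b), qr.IsPath → qr.length ≤ 1
  | SimpleGraph.Walk.nil, _ => by simp
  | SimpleGraph.Walk.cons h₂ r, hp => by
      rename_i z₂
      have hz₂ : z₂ = u := by
        have : z₂ ∈ G.neighborSet v := h₂
        rwa [hnb, Set.mem_singleton_iff] at this
      subst hb
      subst hz₂
      rw [SimpleGraph.Walk.cons_isPath_iff] at hp
      have hr : r = SimpleGraph.Walk.nil := SimpleGraph.Walk.isPath_iff_eq_nil.mp hp.1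
      rw [SimpleGraph.Walk.length_cons, hr]
      simp

lemma isTree_of_delVert (hG' : (delVert G v).IsTree) (hnb : G.neighborSet v = {u}) (hu : u ≠ v) :
    G.IsTree := by
  have hadj_vu : G.Adj v u := by
    have : u ∈ G.neighborSet v := by rw [hnb]; rfl
    exact this
  constructor
  · have hreach : ∀ a : V, G.Reachable a v := by
      intro a
      by_cases ha : a = v
      · rw [ha]
      · have h1 : (delVert G v).Reachable ⟨a, ha⟩ ⟨u, hu⟩ := hG'.isConnected.preconnected _ _
        have h2 : G.Reachable a u := h1.map (homDel G v)
        exact h2.trans ⟨SimpleGraph.Walk.cons hadj_vu.symm SimpleGraph.Walk.nil⟩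
    have : Nonempty V := ⟨v⟩
    exact ⟨fun a b => (hreach a).trans (hreach b).symm⟩
  · intro x c hc
    by_cases hv : v ∈ c.support
    · have hcyc := hc.rotate hv
      generalize hgen : c.rotate v hv = c' at hcyc
      cases c' with
      | nil => exact hcyc.ne_nil rfl
      | @cons _ z _ h q =>
          have hz : z = u := by
            have : z ∈ G.neighborSet v := h
            rwa [hnb, Set.mem_singleton_iff] at this
          subst hz
          have h3 : 3 ≤ q.length + 1 := by
            simpa using hcyc.three_le_length
          rw [SimpleGraph.Walk.cons_isCycle_iff] at hcyc
          have hqrev : q.reverse.IsPath := hcyc.1.reverse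
          have hlen : q.length = q.reverse.length := (SimpleGraph.Walk.length_reverse q).symm
          have hle := path_from_leaf_short hnb rfl q.reverse hqrev
          omega
    · have hx : x ≠ v := fun h => hv (h ▸ c.start_mem_support)
      obtain ⟨c'', hmap⟩ := walk_lift c (fun w hw hwv => absurd hw (by rw [hwv]; exact hv)) hx hx
      rw [← hmap] at hc
      exact hG'.IsAcyclic c''
        ((SimpleGraph.Walk.map_isCycle_iff_of_injective Subtype.val_injective).mp hc)

end Leaf2

lemma exists_leaf [Fintype V] {G : SimpleGraph V} (hG : G.IsTree) (hcard : 2 ≤ Fintype.card V) :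
    ∃ v u : V, u ≠ v ∧ G.neighborSet v = {u} := by
  classical
  have hE := hG.card_edgeFinset
  have hhand := G.sum_degrees_eq_twice_card_edges
  have h1 : ∃ v : V, G.degree v ≤ 1 := by
    by_contra hcon
    push_neg at hcon
    have hge : Finset.univ.card * 2 ≤ ∑ v : V, G.degree v :=
      Finset.card_nsmul_le_sum Finset.univ _ 2 (fun v _ => hcon v)
    rw [Finset.card_univ] at hge
    omega
  obtain ⟨v, hv⟩ := h1
  obtain ⟨w, hw⟩ := Fintype.exists_ne_of_one_lt_card (by omega) v
  obtain ⟨pw⟩ := hG.isConnected.preconnected v w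
  have hex : ∃ u : V, G.Adj v u := by
    cases pw with
    | nil => exact absurd rfl hw
    | cons h q => exact ⟨_, h⟩
  obtain ⟨u, hadj⟩ := hex
  have hu_mem : u ∈ G.neighborFinset v := by rwa [SimpleGraph.mem_neighborFinset]
  have hcard1 : (G.neighborFinset v).card = 1 := by
    have : 1 ≤ (G.neighborFinset v).card := Finset.card_pos.mpr ⟨u, hu_mem⟩
    have hd : (G.neighborFinset v).card ≤ 1 := hv
    omega
  obtain ⟨a, ha⟩ := Finset.card_eq_one.mp hcard1
  have hau : a = u := by
    rw [ha, Finset.mem_singleton] at hu_mem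
    exact hu_mem.symm
  subst hau
  refine ⟨v, a, (G.ne_of_adj hadj).symm, ?_⟩
  rw [← Set.coe_toFinset (G.neighborSet v), ← SimpleGraph.neighborFinset_def, ha]
  simp

lemma euler_tour_aux : ∀ (n : ℕ) {V : Type*} [Fintype V] (G : SimpleGraph V), G.IsTree →
    ∀ (p : V → X), Fintype.card V = n →
    ∃ l : List V, l ≠ [] ∧ (∀ w : V, w ∈ l) ∧ chainSum (l.map p) ≤ 2 * graphCost G p := by
  intro n
  induction n using Nat.strongRecOn with
  | ind n ih =>
  intro V _ G hG p hn
  classical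
  have hpos : 1 ≤ Fintype.card V := Fintype.card_pos_iff.mpr hG.isConnected.nonempty
  by_cases hone : Fintype.card V = 1
  · obtain ⟨v₀⟩ := hG.isConnected.nonempty
    refine ⟨[v₀], by simp, fun w => ?_, ?_⟩
    · rw [List.mem_singleton]
      exact Fintype.card_le_one_iff.mp (le_of_eq hone) w v₀
    · simp only [List.map_cons, List.map_nil, chainSum_single]
      exact mul_nonneg zero_le_two (graphCost_nonneg G p)
  · have hcard2 : 2 ≤ Fintype.card V := by omega
    obtain ⟨v, u, hu, hnb⟩ := exists_leaf hG hcard2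
    have hG' : (delVert G v).IsTree := isTree_delVert hG hnb hu
    have hcard' : Fintype.card {w : V // w ≠ v} = n - 1 := by
      rw [← hn]
      simp [Fintype.card_subtype_compl]
    obtain ⟨l', hl'ne, hl'mem, hl'cost⟩ :=
      ih (n - 1) (by omega) (delVert G v) hG' (fun w => p ↑w) hcard'
    have humem : (⟨u, hu⟩ : {w : V // w ≠ v}) ∈ l' := hl'mem _
    have humem2 : u ∈ l'.map (Subtype.val : {w : V // w ≠ v} → V) :=
      List.mem_map_of_mem humem
    obtain ⟨A, B, hAB⟩ := List.append_of_mem humem2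
    refine ⟨A ++ u :: v :: u :: B, by simp, ?_, ?_⟩
    · intro w
      by_cases hwv : w = v
      · subst hwv; simp
      · have : w ∈ l'.map (Subtype.val : {w : V // w ≠ v} → V) :=
          List.mem_map_of_mem (hl'mem ⟨w, hwv⟩)
        rw [hAB] at this
        simp only [List.mem_append, List.mem_cons] at this ⊢
        tauto
    · have hmapsplit : (A ++ u :: v :: u :: B).map p
          = A.map p ++ p u :: p v :: p u :: B.map p := by simp
      rw [hmapsplit, chainSum_splice]
      have hcost := cost_split p hnb (G := G) (v := v) (u := u)
      have hmap2 : (A ++ u :: B).map p = A.map p ++ p u :: B.map p := by simp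
      have hchain : chainSum (A.map p ++ p u :: B.map p)
          = chainSum (l'.map (fun w : {w : V // w ≠ v} => p ↑w)) := by
        rw [← hmap2, ← hAB, List.map_map]
        rfl
      rw [hchain, hcost]
      have := hl'cost
      rw [dist_comm (p u) (p v)]
      ring_nf
      ring_nf at this ⊢
      nlinarith [dist_nonneg (x := p u) (y := p v)]

lemma euler_tour {V : Type*} [Fintype V] (G : SimpleGraph V) (hG : G.IsTree) (p : V → X) :
    ∃ l : List V, l ≠ [] ∧ (∀ w : V, w ∈ l) ∧ chainSum (l.map p) ≤ 2 * graphCost G p :=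
  euler_tour_aux (Fintype.card V) G hG p rfl

lemma path_tree_aux : ∀ (n : ℕ) {V : Type*} [Fintype V] [DecidableEq V] (l : List V) (p : V → X),
    l.length = n → l ≠ [] → l.Nodup → (∀ w : V, w ∈ l) →
    ∃ G : SimpleGraph V, G.IsTree ∧ graphCost G p ≤ chainSum (l.map p) := by
  intro n
  induction n using Nat.strongRecOn with
  | ind n ih =>
  intro V _ _ l p hlen hne hnd hall
  cases l with
  | nil => exact absurd rfl hne
  | cons x rest =>
  cases rest with
  | nil =>
      have hsub : ∀ w : V, w = x := fun w => by simpa using hall w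
      refine ⟨⊥, ⟨?_, SimpleGraph.isAcyclic_bot⟩, ?_⟩
      · have : Nonempty V := ⟨x⟩
        refine ⟨fun a b => ?_⟩
        have hab : a = b := (hsub a).trans (hsub b).symm
        exact hab ▸ SimpleGraph.Reachable.refl a
      · classical
        rw [graphCost_eq]
        rw [SimpleGraph.edgeFinset_bot]
        simpa using chainSum_nonneg _
  | cons y t =>
      have hxmem : x ∉ y :: t := (List.nodup_cons.mp hnd).1
      have hyx : y ≠ x := fun h => hxmem (h ▸ (List.mem_cons_self : y ∈ y :: t))
      have hmem : ∀ w ∈ y :: t, w ≠ x := fun w hw hwx => hxmem (hwx ▸ hw)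
      set l' : List {w : V // w ≠ x} := (y :: t).pmap (fun w h => ⟨w, h⟩) hmem with hl'def
      have hlen' : l'.length = n - 1 := by
        rw [hl'def, List.length_pmap]
        simp only [List.length_cons] at hlen ⊢
        omega
      have hne' : l' ≠ [] := by
        rw [hl'def]
        simp [List.pmap]
      have hnd' : l'.Nodup :=
        List.Nodup.pmap (fun a ha b hb h => congrArg Subtype.val h) (List.nodup_cons.mp hnd).2
      have hall' : ∀ w : {w : V // w ≠ x}, w ∈ l' := by
        intro w
        have hw : w.val ∈ y :: t := by
          have := hall w.val
          rw [List.mem_cons] at this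
          exact this.resolve_left w.2
        rw [hl'def, List.mem_pmap]
        exact ⟨w.val, hw, Subtype.ext rfl⟩
      have hlt : n - 1 < n := by
        simp only [List.length_cons] at hlen
        omega
      obtain ⟨G', hG', hcost'⟩ :=
        ih (n - 1) hlt l' (fun w => p ↑w) hlen' hne' hnd' hall'
      let G : SimpleGraph V :=
        { Adj := fun a b =>
            (∃ (ha : a ≠ x) (hb : b ≠ x), G'.Adj ⟨a, ha⟩ ⟨b, hb⟩) ∨ (a = x ∧ b = y) ∨ (a = y ∧ b = x)
          symm := by
            constructor
            rintro a b (⟨ha, hb, h⟩ | ⟨rfl, rfl⟩ | ⟨rfl, rfl⟩)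
            · exact Or.inl ⟨hb, ha, h.symm⟩
            · exact Or.inr (Or.inr ⟨rfl, rfl⟩)
            · exact Or.inr (Or.inl ⟨rfl, rfl⟩)
          loopless := by
            constructor
            rintro a (⟨ha, hb, h⟩ | ⟨rfl, h⟩ | ⟨h, rfl⟩)
            · exact G'.loopless.irrefl _ h
            · exact hyx h.symm
            · exact hyx h.symm }
      have hnb : G.neighborSet x = {y} := by
        ext w
        simp only [SimpleGraph.mem_neighborSet, Set.mem_singleton_iff]
        constructor
        · rintro (⟨ha, hb, h⟩ | ⟨-, rfl⟩ | ⟨hx, -⟩)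
          · exact absurd rfl ha
          · rfl
          · exact absurd hx.symm hyx
        · rintro rfl
          exact Or.inr (Or.inl ⟨rfl, rfl⟩)
      have hcomap : delVert G x = G' := by
        ext a b
        constructor
        · rintro (⟨ha, hb, h⟩ | ⟨hax, -⟩ | ⟨-, hbx⟩)
          · convert h <;> exact Subtype.ext rfl
          · exact absurd hax a.2
          · exact absurd hbx b.2
        · intro h
          exact Or.inl ⟨a.2, b.2, by convert h <;> exact Subtype.ext rfl⟩
      have htree : G.IsTree := by
        refine isTree_of_delVert (u := y) ?_ hnb hyx
        rw [hcomap]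
        exact hG'
      refine ⟨G, htree, ?_⟩
      have hsplit := cost_split (G := G) (v := x) (u := y) p hnb
      rw [hcomap] at hsplit
      have hmapeq : l'.map (fun w : {w : V // w ≠ x} => p ↑w) = (y :: t).map p := by
        rw [hl'def, List.map_pmap]
        exact List.pmap_eq_map _
      rw [hmapeq] at hcost'
      have hchain : chainSum ((x :: y :: t).map p)
          = dist (p x) (p y) + chainSum ((y :: t).map p) := by
        simp only [List.map_cons]
        rw [chainSum_cons_cons]
      rw [hsplit, hchain, dist_comm (p y) (p x)]
      linarith


end AuxSteiner

/-- Steiner-type monotonicity: for finite point sets `S ⊆ T` in a metric space with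
`|S| ≥ 2`, the cost of a minimum spanning tree of `S` is at most twice that of `T`:
for every spanning tree of `T` there is a spanning tree of `S` of at most twice the cost. -/
theorem stmt_6 {X : Type*} [MetricSpace X] (S T : Finset X) (hST : S ⊆ T)
    (hS : 2 ≤ S.card)
    (GT : SimpleGraph ↥T) (hGT : GT.IsTree) :
    ∃ GS : SimpleGraph ↥S, GS.IsTree ∧
      graphCost GS (fun v => (v : X)) ≤ 2 * graphCost GT (fun v => (v : X)) := by
  classical
  obtain ⟨l, hlne, hlmem, hlcost⟩ := euler_tour GT hGT (fun v => (v : X))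
  set L : List X := l.map (fun v : ↥T => (v : X)) with hL
  set lX : List X := L.filter (fun x => x ∈ S) with hlX
  set lS : List X := lX.dedup with hlSdef
  have hSsub : ∀ x ∈ lS, x ∈ S := by
    intro x hx
    have : x ∈ lX := lX.dedup_sublist.subset hx
    rw [hlX, List.mem_filter] at this
    simpa using this.2
  have hmemS : ∀ x ∈ S, x ∈ lS := by
    intro x hx
    rw [hlSdef, List.mem_dedup, hlX, List.mem_filter]
    refine ⟨?_, by simpa using hx⟩
    rw [hL, List.mem_map]
    exact ⟨⟨x, hST hx⟩, hlmem _, rfl⟩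
  set lS' : List ↥S := lS.pmap (fun x h => (⟨x, h⟩ : ↥S)) hSsub with hlS'def
  have hnd' : lS'.Nodup :=
    List.Nodup.pmap (fun a ha b hb h => congrArg Subtype.val h) lX.nodup_dedup
  have hall' : ∀ s : ↥S, s ∈ lS' := by
    intro s
    rw [hlS'def, List.mem_pmap]
    exact ⟨s.val, hmemS _ s.2, Subtype.ext rfl⟩
  have hne' : lS' ≠ [] := by
    obtain ⟨s₀, hs₀⟩ := Finset.card_pos.mp (by omega : 0 < S.card)
    intro h
    have := hall' ⟨s₀, hs₀⟩
    rw [h] at this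
    exact absurd this List.not_mem_nil
  obtain ⟨GS, hGS, hGScost⟩ :=
    path_tree_aux lS'.length lS' (fun v : ↥S => (v : X)) rfl hne' hnd' hall'
  refine ⟨GS, hGS, ?_⟩
  have hmapeq : lS'.map (fun v : ↥S => (v : X)) = lS := by
    rw [hlS'def, List.map_pmap]
    exact (List.pmap_eq_map (f := fun x : X => x) (l := lS) hSsub).trans (List.map_id lS)
  rw [hmapeq] at hGScost
  have h1 : chainSum lS ≤ chainSum lX := chainSum_sublist lX.dedup_sublist
  have h2 : chainSum lX ≤ chainSum L := chainSum_sublist (List.filter_sublist (l := L))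
  calc graphCost GS (fun v : ↥S => (v : X)) ≤ chainSum lS := hGScost
    _ ≤ chainSum lX := h1
    _ ≤ chainSum L := h2
    _ ≤ 2 * graphCost GT (fun v : ↥T => (v : X)) := hlcost
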